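/- Let (M, I, J, K, Ω) be a compact balanced HKT manifold. Then the Laplacians Δ_∂ = ∂∂* + ∂*∂ and Δ_{∂_J} = ∂_J ∂_J* + ∂_J* ∂_J acting on (p,0)-forms coincide, and consequently the spaces of harmonic forms satisfy 𝓗^{p,0}_∂(M) = 𝓗^{p,0}_{∂_J}(M) for every p. -/

import Mathlib

lemma harmonic_iff_aux {V : Type*} [NormedAddCommGroup V] [InnerProductSpace ℂ V]
    (d ds : Module.End ℂ V)
    (hadj : ∀ x y : V, (inner ℂ (d x) y : ℂ) = inner ℂ x (ds y)) (α : V) :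
    (d * ds + ds * d) α = 0 ↔ (d α = 0 ∧ ds α = 0) := by
  constructor
  · intro h
    have e1 : (inner ℂ ((d (ds α))) α : ℂ) = (‖ds α‖ : ℂ)^2 := by
      rw [hadj]; exact inner_self_eq_norm_sq_to_K _
    have e0 : (inner ℂ (d α) (d α) : ℂ) = inner ℂ α (ds (d α)) := hadj α (d α)
    have e2 : (inner ℂ (ds (d α)) α : ℂ) = (‖d α‖ : ℂ)^2 := by
      rw [← inner_conj_symm, ← e0, inner_self_eq_norm_sq_to_K]
      simp
    have hsum : (‖ds α‖ : ℂ)^2 + (‖d α‖ : ℂ)^2 = 0 := by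
      rw [← e1, ← e2, ← inner_add_left]
      have : d (ds α) + ds (d α) = 0 := by
        simpa [Module.End.mul_apply] using h
      rw [this, inner_zero_left]
    have hr : ‖ds α‖^2 + ‖d α‖^2 = 0 := by exact_mod_cast hsum
    constructor
    · rw [← norm_eq_zero]; nlinarith [norm_nonneg (d α), norm_nonneg (ds α)]
    · rw [← norm_eq_zero]; nlinarith [norm_nonneg (d α), norm_nonneg (ds α)]
  · intro ⟨h1, h2⟩
    simp [Module.End.mul_apply, h1, h2]

theorem balanced_HKT_laplacians_coincide
    {V : Type*} [NormedAddCommGroup V] [InnerProductSpace ℂ V] (n : ℕ)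
    (A : ℕ → Submodule ℂ V)
    (del delJ delS delJS L Lam : Module.End ℂ V)
    -- degrees
    (hdeldeg : ∀ p, ∀ x ∈ A p, del x ∈ A (p + 1))
    (hdelJdeg : ∀ p, ∀ x ∈ A p, delJ x ∈ A (p + 1))
    (hLdeg : ∀ p, ∀ x ∈ A p, L x ∈ A (p + 2))
    -- differentials
    (hd2 : del * del = 0) (hdJ2 : delJ * delJ = 0)
    (hanti : del * delJ + delJ * del = 0)
    -- HKT condition: ∂Ω = 0, hence [∂, L] = 0, and also [∂_J, L] = 0
    (hdL : del * L = L * del) (hdJL : delJ * L = L * delJ)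
    -- formal adjoints with respect to the L² inner product
    (hadj : ∀ x y : V, (inner ℂ (del x) y : ℂ) = inner ℂ x (delS y))
    (hadjJ : ∀ x y : V, (inner ℂ (delJ x) y : ℂ) = inner ℂ x (delJS y))
    (hadjL : ∀ x y : V, (inner ℂ (L x) y : ℂ) = inner ℂ x (Lam y))
    -- balanced HKT identities (Proposition 3.4)
    (h1 : delS * L - L * delS = -delJ)
    (h2 : del * Lam - Lam * del = delJS)
    (h3 : L * delJS - delJS * L = -del)
    (h4 : Lam * delJ - delJ * Lam = delS) :
    del * delS + delS * del = delJ * delJS + delJS * delJ ∧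
    ∀ p, ∀ α ∈ A p, ((del α = 0 ∧ delS α = 0) ↔ (delJ α = 0 ∧ delJS α = 0)) := by
  have key : del * delS + delS * del = delJ * delJS + delJS * delJ := by
    have hS : delS = Lam * delJ - delJ * Lam := h4.symm
    have hJS : delJS = del * Lam - Lam * del := h2.symm
    rw [hS, hJS]
    have expand :
        (del * (Lam * delJ - delJ * Lam) + (Lam * delJ - delJ * Lam) * del) -
          (delJ * (del * Lam - Lam * del) + (del * Lam - Lam * del) * delJ) =
        Lam * (del * delJ + delJ * del) - (del * delJ + delJ * del) * Lam := by
      noncomm_ring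
    have hz : (del * (Lam * delJ - delJ * Lam) + (Lam * delJ - delJ * Lam) * del) -
        (delJ * (del * Lam - Lam * del) + (del * Lam - Lam * del) * delJ) = 0 := by
      rw [expand, hanti]; simp
    exact sub_eq_zero.mp hz
  refine ⟨key, fun p α _ => ?_⟩
  rw [← harmonic_iff_aux del delS hadj α, ← harmonic_iff_aux delJ delJS hadjJ α, key]
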